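/- Let K be a field and n ≥ 1. In the planar Cremona group Cr₂(K), let s be the automorphism with s(x) = x + 1, s(y) = y, and for each polynomial P ∈ K[X] of degree at most n let α_P be the automorphism with α_P(x) = x, α_P(y) = y + P(x). Then the subgroup Rₙ of Cr₂(K) generated by s together with all α_P with deg P ≤ n is nilpotent of nilpotency class at most n + 1. -/

import Mathlib

open MvPolynomial

/-- The rational function field `K(X,Y)`, realized as the fraction field of the polynomial
ring in two variables. Its group of `K`-algebra automorphisms is the planar Cremona
group `Cr₂(K)`. -/
noncomputable abbrev CremonaField (K : Type*) [Field K] : Type _ :=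
  FractionRing (MvPolynomial (Fin 2) K)

/-- The image of the first variable in `K(X,Y)`. -/
noncomputable def genX (K : Type*) [Field K] : CremonaField K :=
  algebraMap (MvPolynomial (Fin 2) K) (CremonaField K) (X 0)

/-- The image of the second variable in `K(X,Y)`. -/
noncomputable def genY (K : Type*) [Field K] : CremonaField K :=
  algebraMap (MvPolynomial (Fin 2) K) (CremonaField K) (X 1)



set_option maxHeartbeats 1000000
set_option synthInstance.maxHeartbeats 400000

open scoped commutatorElement

section CremonaAux

variable {K : Type*} [Field K]

/-- Automorphisms of the Cremona field are determined by values on `genX`, `genY`. -/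
lemma cremona_ext (σ τ : CremonaField K ≃ₐ[K] CremonaField K)
    (hx : σ (genX K) = τ (genX K)) (hy : σ (genY K) = τ (genY K)) : σ = τ := by
  have key : (σ : CremonaField K →+* CremonaField K) = τ := by
    apply IsLocalization.ringHom_ext (nonZeroDivisors (MvPolynomial (Fin 2) K))
    apply MvPolynomial.ringHom_ext
    · intro a
      simp only [RingHom.comp_apply]
      have h : (algebraMap (MvPolynomial (Fin 2) K) (CremonaField K)) (MvPolynomial.C a)
          = algebraMap K (CremonaField K) a := (IsScalarTower.algebraMap_apply K _ _ a).symm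
      rw [h]
      simp [AlgEquiv.commutes]
    · intro i
      fin_cases i
      · exact hx
      · exact hy
  exact AlgEquiv.ext fun a => RingHom.congr_fun key a

lemma taylor_coeff_of_le {P : Polynomial K} {c : K} {k : ℕ} (h : P.natDegree ≤ k) :
    (Polynomial.taylor c P).coeff k = P.coeff k := by
  rw [Polynomial.taylor_coeff]
  rcases lt_or_eq_of_le h with h' | h'
  · rw [Polynomial.hasseDeriv_eq_zero_of_lt_natDegree P k h', Polynomial.eval_zero,
      Polynomial.coeff_eq_zero_of_natDegree_lt h']
  · have hC : Polynomial.hasseDeriv k P = Polynomial.C (P.coeff k) := by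
      ext m
      rw [Polynomial.hasseDeriv_coeff, Polynomial.coeff_C]
      cases m with
      | zero => simp
      | succ m =>
          rw [Polynomial.coeff_eq_zero_of_natDegree_lt (by omega : P.natDegree < m + 1 + k)]
          simp
    rw [hC, Polynomial.eval_C]

lemma natDegree_sub_taylor_le {P : Polynomial K} {c : K} {m : ℕ} (h : P.natDegree ≤ m) :
    (P - Polynomial.taylor c P).natDegree ≤ m - 1 := by
  rw [Polynomial.natDegree_le_iff_coeff_eq_zero]
  intro N hN
  have hk : P.natDegree ≤ N := by omega
  rw [Polynomial.coeff_sub, taylor_coeff_of_le hk, sub_self]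

lemma natDegree_taylor_sub_le {P : Polynomial K} {c : K} {m : ℕ} (h : P.natDegree ≤ m) :
    (Polynomial.taylor c P - P).natDegree ≤ m - 1 := by
  rw [show Polynomial.taylor c P - P = -(P - Polynomial.taylor c P) by ring,
    Polynomial.natDegree_neg]
  exact natDegree_sub_taylor_le h

/-- The standard form of elements of our Cremona subgroup. -/
def CremonaForm (c : K) (P : Polynomial K) (σ : CremonaField K ≃ₐ[K] CremonaField K) : Prop :=
  σ (genX K) = genX K + algebraMap K (CremonaField K) c ∧
  σ (genY K) = genY K + Polynomial.aeval (genX K) P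

lemma aeval_taylor_cremona (x : CremonaField K) (c : K) (P : Polynomial K) :
    Polynomial.aeval x (Polynomial.taylor c P)
      = Polynomial.aeval (x + algebraMap K (CremonaField K) c) P := by
  rw [Polynomial.taylor_apply, Polynomial.aeval_comp]
  simp

lemma apply_aeval_genX (σ : CremonaField K ≃ₐ[K] CremonaField K) {c : K}
    (hx : σ (genX K) = genX K + algebraMap K (CremonaField K) c) (P : Polynomial K) :
    σ (Polynomial.aeval (genX K) P) = Polynomial.aeval (genX K) (Polynomial.taylor c P) := by
  rw [aeval_taylor_cremona, ← hx, Polynomial.aeval_algHom_apply σ (genX K) P]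

namespace CremonaForm

variable {c c' b : K} {P P' Q : Polynomial K}
variable {σ τ : CremonaField K ≃ₐ[K] CremonaField K}

lemma one : CremonaForm (0 : K) 0 (1 : CremonaField K ≃ₐ[K] CremonaField K) := by
  constructor <;> simp

lemma congr (h : CremonaForm c P σ) (hc : c = c') (hP : P = P') : CremonaForm c' P' σ :=
  hc ▸ hP ▸ h

lemma ext (h1 : CremonaForm c P σ) (h2 : CremonaForm c P τ) : σ = τ :=
  cremona_ext _ _ (by rw [h1.1, h2.1]) (by rw [h1.2, h2.2])

lemma mul (hσ : CremonaForm c P σ) (hτ : CremonaForm c' P' τ) :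
    CremonaForm (c + c') (P + Polynomial.taylor c P') (σ * τ) := by
  obtain ⟨h1, h2⟩ := hσ
  obtain ⟨h3, h4⟩ := hτ
  constructor
  · rw [AlgEquiv.mul_apply, h3, map_add, h1, AlgEquiv.commutes, map_add]
    ring
  · rw [AlgEquiv.mul_apply, h4, map_add, h2, apply_aeval_genX σ h1, map_add]
    ring

lemma inv (hσ : CremonaForm c P σ) :
    CremonaForm (-c) (-Polynomial.taylor (-c) P) σ⁻¹ := by
  obtain ⟨h1, h2⟩ := hσ
  have hinv : ∀ z w : CremonaField K, σ w = z → σ⁻¹ z = w := by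
    intro z w h
    rw [← h, ← AlgEquiv.mul_apply, inv_mul_cancel, AlgEquiv.one_apply]
  constructor
  · apply hinv
    rw [map_add, h1, AlgEquiv.commutes, map_neg]
    ring
  · apply hinv
    rw [map_add, h2, apply_aeval_genX σ h1, map_neg, map_neg, Polynomial.taylor_taylor,
      add_neg_cancel, Polynomial.taylor_zero]
    ring

lemma commutator (hσ : CremonaForm b Q σ) (hτ : CremonaForm c P τ) :
    CremonaForm 0 ((Q - Polynomial.taylor c Q) + (Polynomial.taylor b P - P)) ⁅σ, τ⁆ := by
  have h := ((hσ.mul hτ).mul hσ.inv).mul hτ.inv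
  rw [commutatorElement_def]
  refine h.congr (by ring) ?_
  rw [map_neg, map_neg, Polynomial.taylor_taylor, Polynomial.taylor_taylor,
    show b + c + -b = c by ring, add_neg_cancel, Polynomial.taylor_zero]
  ring

end CremonaForm

end CremonaAux

section CremonaGroups

variable (K : Type*) [Field K]

/-- Elements `x ↦ x + c`, `y ↦ y + P(x)` with `deg P ≤ n`. -/
noncomputable def cremonaBig (n : ℕ) : Subgroup (CremonaField K ≃ₐ[K] CremonaField K) where
  carrier := {σ | ∃ c : K, ∃ P : Polynomial K, P.natDegree ≤ n ∧ CremonaForm c P σ}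
  one_mem' := ⟨0, 0, by simp, CremonaForm.one⟩
  mul_mem' := by
    rintro σ τ ⟨c, P, hP, h⟩ ⟨c', P', hP', h'⟩
    exact ⟨c + c', P + Polynomial.taylor c P',
      le_trans (Polynomial.natDegree_add_le _ _)
        (max_le hP (by rw [Polynomial.natDegree_taylor]; exact hP')), h.mul h'⟩
  inv_mem' := by
    rintro σ ⟨c, P, hP, h⟩
    exact ⟨-c, -Polynomial.taylor (-c) P,
      by rw [Polynomial.natDegree_neg, Polynomial.natDegree_taylor]; exact hP, h.inv⟩

/-- Elements `x ↦ x`, `y ↦ y + P(x)` with `deg P ≤ d`. -/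
noncomputable def cremonaFix (d : ℕ) : Subgroup (CremonaField K ≃ₐ[K] CremonaField K) where
  carrier := {σ | ∃ P : Polynomial K, P.natDegree ≤ d ∧ CremonaForm 0 P σ}
  one_mem' := ⟨0, by simp, CremonaForm.one⟩
  mul_mem' := by
    rintro σ τ ⟨P, hP, h⟩ ⟨P', hP', h'⟩
    refine ⟨P + P', le_trans (Polynomial.natDegree_add_le _ _) (max_le hP hP'), ?_⟩
    simpa using h.mul h'
  inv_mem' := by
    rintro σ ⟨P, hP, h⟩
    refine ⟨-P, by rwa [Polynomial.natDegree_neg], ?_⟩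
    simpa using h.inv

variable {K}

lemma comm_mem_fix {n : ℕ} {σ τ : CremonaField K ≃ₐ[K] CremonaField K}
    (hσ : σ ∈ cremonaBig K n) (hτ : τ ∈ cremonaBig K n) : ⁅σ, τ⁆ ∈ cremonaFix K (n - 1) := by
  obtain ⟨b, Q, hQ, hfσ⟩ := hσ
  obtain ⟨c, P, hP, hfτ⟩ := hτ
  exact ⟨_, le_trans (Polynomial.natDegree_add_le _ _)
      (max_le (natDegree_sub_taylor_le hQ) (natDegree_taylor_sub_le hP)),
    hfσ.commutator hfτ⟩

lemma comm_mem_fix' {n d : ℕ} {σ τ : CremonaField K ≃ₐ[K] CremonaField K}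
    (hσ : σ ∈ cremonaFix K d) (hτ : τ ∈ cremonaBig K n) : ⁅σ, τ⁆ ∈ cremonaFix K (d - 1) := by
  obtain ⟨Q, hQ, hfσ⟩ := hσ
  obtain ⟨c, P, hP, hfτ⟩ := hτ
  refine ⟨Q - Polynomial.taylor c Q, natDegree_sub_taylor_le hQ, ?_⟩
  exact (hfσ.commutator hfτ).congr rfl (by rw [Polynomial.taylor_zero]; ring)

lemma comm_eq_one {n : ℕ} {σ τ : CremonaField K ≃ₐ[K] CremonaField K}
    (hσ : σ ∈ cremonaFix K 0) (hτ : τ ∈ cremonaBig K n) : ⁅σ, τ⁆ = 1 := by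
  obtain ⟨Q, hQ, hfσ⟩ := hσ
  obtain ⟨c, P, hP, hfτ⟩ := hτ
  have hQC : Q = Polynomial.C (Q.coeff 0) := Polynomial.eq_C_of_natDegree_le_zero hQ
  refine CremonaForm.ext (P := 0) ((hfσ.commutator hfτ).congr rfl ?_) CremonaForm.one
  rw [Polynomial.taylor_zero, hQC, Polynomial.taylor_C]
  ring

lemma cremonaFix_le_big {n d : ℕ} (h : d ≤ n) : cremonaFix K d ≤ cremonaBig K n := by
  rintro σ ⟨P, hP, hf⟩
  exact ⟨0, P, le_trans hP h, hf⟩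

lemma cremona_lcs_le {n : ℕ} (hn : 1 ≤ n) (i : ℕ) :
    ((⊤ : Subgroup (cremonaBig K n)).lowerCentralSeries i).map (cremonaBig K n).subtype ≤
      (if i = 0 then cremonaBig K n else if i ≤ n then cremonaFix K (n - i) else ⊥) := by
  induction i with
  | zero =>
      rw [lowerCentralSeries_zero, ← MonoidHom.range_eq_map, Subgroup.range_subtype, if_pos rfl]
  | succ i ih =>
      have hstep : ((⊤ : Subgroup (cremonaBig K n)).lowerCentralSeries (i + 1)).map (cremonaBig K n).subtype ≤
          ⁅((⊤ : Subgroup (cremonaBig K n)).lowerCentralSeries i).map (cremonaBig K n).subtype,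
            cremonaBig K n⁆ := by
        have : (⊤ : Subgroup (cremonaBig K n)).lowerCentralSeries (i + 1) =
            ⁅(⊤ : Subgroup (cremonaBig K n)).lowerCentralSeries i, ⊤⁆ := rfl
        rw [this, Subgroup.map_commutator, ← MonoidHom.range_eq_map, Subgroup.range_subtype]
      refine le_trans hstep ?_
      rcases Nat.eq_zero_or_pos i with hi0 | hipos
      · subst hi0
        simp only [if_pos rfl] at ih
        rw [if_neg (by omega), if_pos hn]
        exact le_trans (Subgroup.commutator_mono ih le_rfl)
          (Subgroup.commutator_le.mpr fun σ hσ τ hτ => comm_mem_fix hσ hτ)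
      · rcases le_or_gt (i + 1) n with hile | hign
        · rw [if_neg (by omega), if_pos hile]
          rw [if_neg (by omega), if_pos (by omega)] at ih
          refine le_trans (Subgroup.commutator_mono ih le_rfl) ?_
          refine le_trans (Subgroup.commutator_le.mpr fun σ hσ τ hτ => comm_mem_fix' hσ hτ) ?_
          rw [show n - i - 1 = n - (i + 1) by omega]
        · rw [if_neg (by omega), if_neg (by omega)]
          rcases eq_or_lt_of_le (show n ≤ i by omega) with heq | hlt
          · subst heq
            rw [if_neg (by omega), if_pos le_rfl, Nat.sub_self] at ih
            refine le_trans (Subgroup.commutator_mono ih le_rfl) ?_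
            refine Subgroup.commutator_le.mpr fun σ hσ τ hτ => ?_
            rw [Subgroup.mem_bot]
            exact comm_eq_one hσ hτ
          · rw [if_neg (by omega), if_neg (by omega)] at ih
            refine le_trans (Subgroup.commutator_mono ih le_rfl) ?_
            rw [Subgroup.commutator_bot_left]

lemma cremona_lcs_bot {n : ℕ} (hn : 1 ≤ n) :
    (⊤ : Subgroup (cremonaBig K n)).lowerCentralSeries (n + 1) = ⊥ := by
  have h := cremona_lcs_le (K := K) hn (n + 1)
  rw [if_neg (by omega), if_neg (by omega)] at h
  have h2 : (⊤ : Subgroup (cremonaBig K n)).lowerCentralSeries (n + 1) ≤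
      MonoidHom.ker (cremonaBig K n).subtype := (Subgroup.map_eq_bot_iff _).mp (le_bot_iff.mp h)
  rw [Subgroup.ker_subtype] at h2
  exact le_bot_iff.mp h2

end CremonaGroups

theorem statement3 (K : Type*) [Field K] (n : ℕ) (hn : 1 ≤ n)
    (s : CremonaField K ≃ₐ[K] CremonaField K)
    (hsx : s (genX K) = genX K + 1) (hsy : s (genY K) = genY K) :
    ∃ hN : Group.IsNilpotent
      (Subgroup.closure ({s} ∪ {σ : CremonaField K ≃ₐ[K] CremonaField K |
          ∃ P : Polynomial K, P.natDegree ≤ n ∧ σ (genX K) = genX K ∧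
            σ (genY K) = genY K + Polynomial.aeval (genX K) P}) :
        Subgroup (CremonaField K ≃ₐ[K] CremonaField K)),
      @Group.nilpotencyClass
        (Subgroup.closure ({s} ∪ {σ : CremonaField K ≃ₐ[K] CremonaField K |
          ∃ P : Polynomial K, P.natDegree ≤ n ∧ σ (genX K) = genX K ∧
            σ (genY K) = genY K + Polynomial.aeval (genX K) P}) :
        Subgroup (CremonaField K ≃ₐ[K] CremonaField K)) _ ≤ n + 1 := by
  set C : Subgroup (CremonaField K ≃ₐ[K] CremonaField K) :=
    Subgroup.closure ({s} ∪ {σ : CremonaField K ≃ₐ[K] CremonaField K |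
      ∃ P : Polynomial K, P.natDegree ≤ n ∧ σ (genX K) = genX K ∧
        σ (genY K) = genY K + Polynomial.aeval (genX K) P}) with hC
  have hCle : C ≤ cremonaBig K n := by
    rw [hC, Subgroup.closure_le]
    rintro σ (hσ | ⟨P, hP, h1, h2⟩)
    · rw [Set.mem_singleton_iff] at hσ
      subst hσ
      refine ⟨1, 0, by simp, ?_, ?_⟩
      · rw [hsx, map_one]
      · rw [hsy]
        simp
    · refine ⟨0, P, hP, ?_, h2⟩
      rw [h1]
      simp
  haveI hNbig : Group.IsNilpotent (cremonaBig K n) :=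
    nilpotent_iff_lowerCentralSeries.mpr ⟨n + 1, cremona_lcs_bot hn⟩
  have hclass : Group.nilpotencyClass (G := cremonaBig K n) ≤ n + 1 :=
    lowerCentralSeries_eq_bot_iff_nilpotencyClass_le.mp (cremona_lcs_bot hn)
  let e := Subgroup.subgroupOfEquivOfLe hCle
  haveI hNC : Group.IsNilpotent C := nilpotent_of_surjective e.toMonoidHom e.surjective
  refine ⟨hNC, ?_⟩
  calc Group.nilpotencyClass (G := C)
      ≤ Group.nilpotencyClass (G := C.subgroupOf (cremonaBig K n)) :=
        nilpotencyClass_le_of_surjective e.toMonoidHom e.surjective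
    _ ≤ Group.nilpotencyClass (G := cremonaBig K n) :=
        Subgroup.nilpotencyClass_le _
    _ ≤ n + 1 := hclass
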